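/- If W is a self-dual partial isometry in M_{2N}(ℂ) (W^♯ = W and W W* W = W), then the initial space (ker W)^⊥ has even dimension, and the map v ↦ W* 𝒯 v restricted to the initial space satisfies: v ⊥ W*𝒯v for all v in the initial space, and (W*𝒯)² v = -v. -/

import Mathlib

open Matrix

open Module

lemma even_aux {E : Type*} [NormedAddCommGroup E] [InnerProductSpace ℂ E]
    [FiniteDimensional ℂ E] :
    ∀ n : ℕ, ∀ (S : Submodule ℂ E) (C : E → E),
      finrank ℂ S = n →
      (∀ v ∈ S, C v ∈ S) →
      (∀ v ∈ S, C (C v) = -v) →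
      (∀ v ∈ S, ∀ w ∈ S, (inner ℂ (C v) (C w) : ℂ) = inner ℂ w v) →
      Even n := by
  intro n
  induction n using Nat.strong_induction_on with
  | _ n ih =>
    intro S C hrank hmap hCC hinner
    rcases Nat.eq_zero_or_pos n with hn | hn
    · simp [hn]
    -- find a nonzero vector in S
    have hpos : 0 < finrank ℂ S := hrank ▸ hn
    obtain ⟨⟨v, hvS⟩, hv0'⟩ := finrank_pos_iff_exists_ne_zero.mp hpos
    have hv0 : v ≠ 0 := fun h => hv0' (Subtype.ext (by simpa using h))
    set u : E := (‖v‖ : ℂ)⁻¹ • v with hu_def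
    have huS : u ∈ S := S.smul_mem _ hvS
    have hnu : ‖u‖ = 1 := norm_smul_inv_norm hv0
    set w : E := C u with hw_def
    have hwS : w ∈ S := hmap u huS
    have hCw : C w = -u := hCC u huS
    have horth : (inner ℂ w u : ℂ) = 0 := by
      have h1 : (inner ℂ (C u) (C w) : ℂ) = inner ℂ w u := hinner u huS w hwS
      rw [hCw, ← hw_def, inner_neg_right] at h1
      have : (inner ℂ w u : ℂ) + inner ℂ w u = 0 := by linear_combination -h1
      exact by linear_combination this / 2
    have horth' : (inner ℂ u w : ℂ) = 0 := by
      rw [← inner_conj_symm, horth, map_zero]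
    have hnw : ‖w‖ = 1 := by
      have h1 : (inner ℂ (C u) (C u) : ℂ) = inner ℂ u u := hinner u huS u huS
      rw [← hw_def] at h1
      rw [inner_self_eq_norm_sq_to_K, inner_self_eq_norm_sq_to_K] at h1
      have h2 : (‖w‖ : ℝ)^2 = (‖u‖ : ℝ)^2 := by exact_mod_cast h1
      have := abs_eq_abs.mpr (Or.inl (by nlinarith [norm_nonneg w, norm_nonneg u] : ‖w‖ = ‖u‖))
      rw [hnu] at *
      nlinarith [norm_nonneg w]
    have hortho : Orthonormal ℂ ![u, w] := by
      constructor
      · intro i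
        fin_cases i <;> simpa using (by assumption : _)
      · intro i j hij
        fin_cases i <;> fin_cases j <;> simp at hij ⊢ <;> assumption
    have hli := hortho.linearIndependent
    set P : Submodule ℂ E := Submodule.span ℂ (Set.range ![u, w]) with hP_def
    have hPrank : finrank ℂ P = 2 := by
      rw [finrank_span_eq_card hli]
      simp
    have huP : u ∈ P := Submodule.subset_span ⟨0, rfl⟩
    have hwP : w ∈ P := Submodule.subset_span ⟨1, rfl⟩
    have hPS : P ≤ S := by
      rw [hP_def, Submodule.span_le]
      rintro _ ⟨i, rfl⟩
      fin_cases i <;> assumption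
    have key := Submodule.finrank_add_inf_finrank_orthogonal (𝕜 := ℂ) hPS
    set S' : Submodule ℂ E := Pᗮ ⊓ S with hS'_def
    have hS'S : S' ≤ S := inf_le_right
    have hm : finrank ℂ P + finrank ℂ S' = n := by rw [key, hrank]
    rw [hPrank] at hm
    have hlt : finrank ℂ S' < n := by omega
    have hmapC' : ∀ x ∈ S', C x ∈ S' := by
      intro x hx
      have hxS : x ∈ S := hS'S hx
      have hxP : x ∈ Pᗮ := (Submodule.mem_inf.mp hx).1
      refine Submodule.mem_inf.mpr ⟨?_, hmap x hxS⟩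
      rw [Submodule.mem_orthogonal]
      intro p hp
      have hbase : (inner ℂ u (C x) : ℂ) = 0 ∧ (inner ℂ w (C x) : ℂ) = 0 := by
        constructor
        · have hu' : u = -C w := by rw [hCw, neg_neg]
          rw [hu', inner_neg_left]
          have := hinner w hwS x hxS
          rw [this]
          have : (inner ℂ w x : ℂ) = 0 := hxP w hwP
          rw [← inner_conj_symm, this, map_zero, neg_zero]
        · have := hinner u huS x hxS
          rw [← hw_def] at this
          rw [this]
          have : (inner ℂ u x : ℂ) = 0 := hxP u huP
          rw [← inner_conj_symm, this, map_zero]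
      induction hp using Submodule.span_induction with
      | mem p hp =>
        obtain ⟨i, rfl⟩ := hp
        fin_cases i
        · exact hbase.1
        · exact hbase.2
      | zero => simp
      | add a b _ _ ha hb => rw [inner_add_left, ha, hb, add_zero]
      | smul c a _ ha => rw [inner_smul_left, ha, mul_zero]
    have hEven' : Even (finrank ℂ S') :=
      ih _ hlt S' C rfl hmapC'
        (fun x hx => hCC x (hS'S hx))
        (fun x hx y hy => hinner x (hS'S hx) y (hS'S hy))
    obtain ⟨k, hk⟩ := hEven'
    exact ⟨k + 1, by omega⟩


noncomputable def Zmat (N : ℕ) : Matrix (Fin N ⊕ Fin N) (Fin N ⊕ Fin N) ℂ :=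
  Matrix.fromBlocks 0 1 (-1) 0

noncomputable def Tmap {N : ℕ} (ξ : Fin N ⊕ Fin N → ℂ) : Fin N ⊕ Fin N → ℂ :=
  Sum.elim (fun i => -(starRingEnd ℂ) (ξ (Sum.inr i))) (fun i => (starRingEnd ℂ) (ξ (Sum.inl i)))

def cvec {N : ℕ} (v : Fin N ⊕ Fin N → ℂ) : Fin N ⊕ Fin N → ℂ :=
  fun j => (starRingEnd ℂ) (v j)

variable {N : ℕ}

lemma Z_mul_Z : Zmat N * Zmat N = -1 := by
  simp [Zmat, Matrix.fromBlocks_multiply]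
  rw [← Matrix.fromBlocks_one, Matrix.fromBlocks_neg]
  simp

lemma Z_transpose : (Zmat N)ᵀ = -Zmat N := by
  simp [Zmat, Matrix.fromBlocks_transpose, Matrix.fromBlocks_neg]

lemma Z_conjT : (Zmat N)ᴴ = -Zmat N := by
  simp [Zmat, Matrix.fromBlocks_conjTranspose, Matrix.fromBlocks_neg]

lemma Z_mapc : (Zmat N).map (starRingEnd ℂ) = Zmat N := by
  ext i j
  rcases i with i | i <;> rcases j with j | j <;>
    simp [Zmat, Matrix.map_apply, Matrix.fromBlocks, Matrix.one_apply, apply_ite]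

lemma mapc_conjT (A : Matrix (Fin N ⊕ Fin N) (Fin N ⊕ Fin N) ℂ) :
    Aᴴ.map (starRingEnd ℂ) = Aᵀ := by
  ext i j
  simp [Matrix.conjTranspose_apply, Matrix.map_apply]

lemma mapc_mul (A B : Matrix (Fin N ⊕ Fin N) (Fin N ⊕ Fin N) ℂ) :
    (A * B).map (starRingEnd ℂ) = A.map (starRingEnd ℂ) * B.map (starRingEnd ℂ) :=
  Matrix.map_mul

lemma mapc_neg (A : Matrix (Fin N ⊕ Fin N) (Fin N ⊕ Fin N) ℂ) :
    (-A).map (starRingEnd ℂ) = -(A.map (starRingEnd ℂ)) := by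
  ext i j; simp

lemma Tmap_eq (v : Fin N ⊕ Fin N → ℂ) : Tmap v = (-(Zmat N)).mulVec (cvec v) := by
  funext j
  rcases j with j | j <;>
    simp [Tmap, cvec, Zmat, Matrix.mulVec, dotProduct, Fintype.sum_sum_type,
      Matrix.fromBlocks, Matrix.one_apply, apply_ite, Finset.sum_ite_eq']

lemma cvec_mulVec (A : Matrix (Fin N ⊕ Fin N) (Fin N ⊕ Fin N) ℂ) (w : Fin N ⊕ Fin N → ℂ) :
    cvec (A.mulVec w) = (A.map (starRingEnd ℂ)).mulVec (cvec w) := by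
  funext i
  simp [cvec, Matrix.mulVec, dotProduct, map_sum, Matrix.map_apply]

lemma cvec_cvec (v : Fin N ⊕ Fin N → ℂ) : cvec (cvec v) = v := by
  funext i; simp [cvec]

lemma cvec_zero : cvec (0 : Fin N ⊕ Fin N → ℂ) = 0 := by
  funext i; simp [cvec]

lemma dp_conj (u w : Fin N ⊕ Fin N → ℂ) :
    (starRingEnd ℂ) (u ⬝ᵥ w) = cvec u ⬝ᵥ cvec w := by
  simp [dotProduct, cvec, map_sum]

lemma dp_mulVec_left (A : Matrix (Fin N ⊕ Fin N) (Fin N ⊕ Fin N) ℂ)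
    (x w : Fin N ⊕ Fin N → ℂ) :
    (A.mulVec x) ⬝ᵥ w = x ⬝ᵥ (Aᵀ.mulVec w) := by
  rw [dotProduct_comm, dotProduct_mulVec, ← Matrix.mulVec_transpose,
    dotProduct_comm]

noncomputable def dual {N : ℕ} (X : Matrix (Fin N ⊕ Fin N) (Fin N ⊕ Fin N) ℂ) :
    Matrix (Fin N ⊕ Fin N) (Fin N ⊕ Fin N) ℂ :=
  -(Zmat N) * Xᵀ * (Zmat N)

section Identities
variable {W : Matrix (Fin N ⊕ Fin N) (Fin N ⊕ Fin N) ℂ} (hsd : dual W = W)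

include hsd

lemma id_ZWZ : Zmat N * Wᵀ * Zmat N = -W := by
  have := hsd
  unfold dual at this
  calc Zmat N * Wᵀ * Zmat N = -(-(Zmat N) * Wᵀ * Zmat N) := by noncomm_ring
    _ = -W := by rw [this]

lemma id_ZW : Zmat N * W = Wᵀ * Zmat N := by
  have h := id_ZWZ hsd
  have : Zmat N * (Zmat N * Wᵀ * Zmat N) = Zmat N * (-W) := by rw [h]
  calc Zmat N * W = -(Zmat N * -W) := by simp [Matrix.mul_neg]
    _ = -(Zmat N * (Zmat N * Wᵀ * Zmat N)) := by rw [this]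
    _ = -((Zmat N * Zmat N) * Wᵀ * Zmat N) := by noncomm_ring
    _ = Wᵀ * Zmat N := by rw [Z_mul_Z]; noncomm_ring

lemma id_conjW : Zmat N * Wᴴ * (-(Zmat N)) = W.map (starRingEnd ℂ) := by
  have h : (-(Zmat N) * Wᵀ * Zmat N)ᴴ = Wᴴ := by
    have h0 := congrArg Matrix.conjTranspose hsd
    unfold dual at h0
    exact h0
  rw [Matrix.conjTranspose_mul, Matrix.conjTranspose_mul, Z_conjT,
    Matrix.conjTranspose_neg, Z_conjT] at h
  have hWt : Wᵀᴴ = W.map (starRingEnd ℂ) := by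
    ext i j; simp [Matrix.conjTranspose_apply, Matrix.map_apply]
  rw [hWt, neg_neg] at h
  -- h : Zmat N * (W.map conj * (-Zmat N))?? depends on assoc; fix below
  -- From h : (-Zmat N) * (W.map conj) * Zmat N = Wᴴ (up to assoc) derive goal
  have h2 : Zmat N * ((-(Zmat N)) * W.map (starRingEnd ℂ) * Zmat N) * (-(Zmat N))
      = Zmat N * Wᴴ * (-(Zmat N)) := by
    rw [show (-(Zmat N)) * W.map (starRingEnd ℂ) * Zmat N = Wᴴ from by
      rw [← h]; noncomm_ring]
  rw [← h2]
  have hZZ : Zmat N * (-(Zmat N)) = 1 := by rw [Matrix.mul_neg, Z_mul_Z]; simp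
  calc Zmat N * ((-(Zmat N)) * W.map (starRingEnd ℂ) * Zmat N) * (-(Zmat N))
      = (Zmat N * (-(Zmat N))) * W.map (starRingEnd ℂ) * (Zmat N * (-(Zmat N))) := by
        noncomm_ring
    _ = W.map (starRingEnd ℂ) := by rw [hZZ]; simp

end Identities

section Key
variable {W : Matrix (Fin N ⊕ Fin N) (Fin N ⊕ Fin N) ℂ} (hsd : dual W = W)

noncomputable def Mmat (W : Matrix (Fin N ⊕ Fin N) (Fin N ⊕ Fin N) ℂ) :
    Matrix (Fin N ⊕ Fin N) (Fin N ⊕ Fin N) ℂ := Wᴴ * (-(Zmat N))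

include hsd

lemma key_a : Mmat W * ((Mmat W).map (starRingEnd ℂ)) = -(Wᴴ * W) := by
  have hmc : (Mmat W).map (starRingEnd ℂ) = Wᵀ * (-(Zmat N)) := by
    rw [Mmat, mapc_mul, mapc_conjT, mapc_neg, Z_mapc]
  rw [hmc, Mmat]
  calc Wᴴ * (-(Zmat N)) * (Wᵀ * (-(Zmat N)))
      = Wᴴ * (Zmat N * Wᵀ * Zmat N) := by noncomm_ring
    _ = Wᴴ * (-W) := by rw [id_ZWZ hsd]
    _ = -(Wᴴ * W) := by noncomm_ring

lemma key_b : ((Mmat W).map (starRingEnd ℂ))ᵀ * Mmat W = (Wᴴ * W).map (starRingEnd ℂ) := by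
  have hmc : (Mmat W).map (starRingEnd ℂ) = Wᵀ * (-(Zmat N)) := by
    rw [Mmat, mapc_mul, mapc_conjT, mapc_neg, Z_mapc]
  have hmct : ((Mmat W).map (starRingEnd ℂ))ᵀ = Zmat N * W := by
    rw [hmc, Matrix.transpose_mul, Matrix.transpose_neg, Z_transpose,
      Matrix.transpose_transpose]
    simp [Matrix.neg_mul]
  rw [hmct, Mmat, mapc_mul, mapc_conjT]
  calc Zmat N * W * (Wᴴ * (-(Zmat N)))
      = (Zmat N * W) * Wᴴ * (-(Zmat N)) := by noncomm_ring
    _ = (Wᵀ * Zmat N) * Wᴴ * (-(Zmat N)) := by rw [id_ZW hsd]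
    _ = Wᵀ * (Zmat N * Wᴴ * (-(Zmat N))) := by noncomm_ring
    _ = Wᵀ * W.map (starRingEnd ℂ) := by rw [id_conjW hsd]

end Key

lemma dp_mulVec_right (A : Matrix (Fin N ⊕ Fin N) (Fin N ⊕ Fin N) ℂ)
    (x w : Fin N ⊕ Fin N → ℂ) :
    x ⬝ᵥ (A.mulVec w) = (Aᵀ.mulVec x) ⬝ᵥ w := by
  rw [dp_mulVec_left, Matrix.transpose_transpose]

lemma conjT_transpose_eq (A : Matrix (Fin N ⊕ Fin N) (Fin N ⊕ Fin N) ℂ) :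
    Aᴴᵀ = A.map (starRingEnd ℂ) := by
  ext i j
  simp [Matrix.conjTranspose_apply, Matrix.map_apply]

noncomputable def mulVecE {N : ℕ} (Y : Matrix (Fin N ⊕ Fin N) (Fin N ⊕ Fin N) ℂ)
    (v : EuclideanSpace ℂ (Fin N ⊕ Fin N)) : EuclideanSpace ℂ (Fin N ⊕ Fin N) :=
  WithLp.toLp 2 (Y.mulVec v)

section Euclid
variable {W : Matrix (Fin N ⊕ Fin N) (Fin N ⊕ Fin N) ℂ}

lemma mem_ker_iff (x : EuclideanSpace ℂ (Fin N ⊕ Fin N)) :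
    x ∈ LinearMap.ker (Matrix.toEuclideanLin W) ↔ W.mulVec x = 0 := by
  rw [LinearMap.mem_ker, Matrix.toEuclideanLin_apply]
  exact WithLp.toLp_eq_zero 2

lemma inner_eq (x y : EuclideanSpace ℂ (Fin N ⊕ Fin N)) :
    (inner ℂ x y : ℂ) = cvec x ⬝ᵥ y := by
  simp [PiLp.inner_apply, RCLike.inner_apply, dotProduct, cvec, mul_comm]

-- C in matrix form
lemma C_eq (v : EuclideanSpace ℂ (Fin N ⊕ Fin N)) :
    mulVecE Wᴴ (WithLp.toLp 2 (Tmap v)) = (Mmat W).mulVec (cvec v) := by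
  show Wᴴ.mulVec (Tmap v) = (Mmat W).mulVec (cvec v)
  rw [Tmap_eq, Mmat, ← Matrix.mulVec_mulVec]

-- C maps everything into (ker W)ᗮ
lemma C_mem (v : EuclideanSpace ℂ (Fin N ⊕ Fin N)) :
    mulVecE Wᴴ (WithLp.toLp 2 (Tmap v)) ∈ (LinearMap.ker (Matrix.toEuclideanLin W))ᗮ := by
  rw [Submodule.mem_orthogonal]
  intro k hk
  rw [mem_ker_iff] at hk
  rw [inner_eq, C_eq, Mmat, ← Matrix.mulVec_mulVec, dp_mulVec_right]
  have h2 : Wᴴᵀ.mulVec (cvec k) = cvec (W.mulVec k) := by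
    rw [cvec_mulVec, conjT_transpose_eq]
  rw [h2, hk, cvec_zero]
  simp

-- projection property
lemma proj_eq (hpi : W * Wᴴ * W = W) (v : EuclideanSpace ℂ (Fin N ⊕ Fin N))
    (hv : v ∈ (LinearMap.ker (Matrix.toEuclideanLin W))ᗮ) :
    (Wᴴ * W).mulVec v = v := by
  have hker : v - mulVecE (Wᴴ * W) v ∈ LinearMap.ker (Matrix.toEuclideanLin W) := by
    rw [mem_ker_iff]
    show W.mulVec ((v : EuclideanSpace ℂ (Fin N ⊕ Fin N))
      - mulVecE (Wᴴ * W) v : (Fin N ⊕ Fin N) → ℂ) = 0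
    rw [Matrix.mulVec_sub]
    have h3 : W.mulVec (mulVecE (Wᴴ * W) v) = W.mulVec v := by
      show W.mulVec ((Wᴴ * W).mulVec v) = W.mulVec v
      rw [Matrix.mulVec_mulVec, ← Matrix.mul_assoc, hpi]
    rw [h3, sub_self]
  have hmemO : mulVecE (Wᴴ * W) v ∈ (LinearMap.ker (Matrix.toEuclideanLin W))ᗮ := by
    rw [Submodule.mem_orthogonal]
    intro k hk
    rw [mem_ker_iff] at hk
    rw [inner_eq]
    show cvec k ⬝ᵥ (Wᴴ * W).mulVec v = 0
    rw [dp_mulVec_right]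
    have ht : (Wᴴ * W)ᵀ.mulVec (cvec k) = cvec ((Wᴴ * W).mulVec k) := by
      rw [cvec_mulVec]
      have hherm : (Wᴴ * W)ᴴ = Wᴴ * W := by
        rw [Matrix.conjTranspose_mul, Matrix.conjTranspose_conjTranspose]
      have hmt : (Wᴴ * W)ᵀ = (Wᴴ * W).map (starRingEnd ℂ) := by
        calc (Wᴴ * W)ᵀ = (Wᴴ * W)ᴴᵀ := by rw [hherm]
          _ = (Wᴴ * W).map (starRingEnd ℂ) := conjT_transpose_eq _
      rw [hmt]
    rw [ht, ← Matrix.mulVec_mulVec, hk]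
    simp [cvec_zero]
  have huO : v - mulVecE (Wᴴ * W) v ∈ (LinearMap.ker (Matrix.toEuclideanLin W))ᗮ :=
    Submodule.sub_mem _ hv hmemO
  have hz : v - mulVecE (Wᴴ * W) v = 0 := by
    have h0 : (inner ℂ (v - mulVecE (Wᴴ * W) v) (v - mulVecE (Wᴴ * W) v) : ℂ) = 0 :=
      (Submodule.mem_orthogonal _ _).mp huO _ hker
    exact inner_self_eq_zero.mp h0
  rw [sub_eq_zero] at hz
  exact congrArg WithLp.ofLp hz.symm

end Euclid

section Final
variable {W : Matrix (Fin N ⊕ Fin N) (Fin N ⊕ Fin N) ℂ}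

lemma CC_eq (hsd : dual W = W) (v : EuclideanSpace ℂ (Fin N ⊕ Fin N)) :
    mulVecE Wᴴ (WithLp.toLp 2 (Tmap (mulVecE Wᴴ (WithLp.toLp 2 (Tmap v))))) = (-(Wᴴ * W)).mulVec v := by
  calc mulVecE Wᴴ (WithLp.toLp 2 (Tmap (mulVecE Wᴴ (WithLp.toLp 2 (Tmap v)))))
      = (Mmat W).mulVec (cvec (mulVecE Wᴴ (WithLp.toLp 2 (Tmap v)))) := C_eq _
    _ = (Mmat W).mulVec (cvec ((Mmat W).mulVec (cvec v))) := by rw [C_eq]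
    _ = (Mmat W).mulVec (((Mmat W).map (starRingEnd ℂ)).mulVec v) := by
        rw [cvec_mulVec, cvec_cvec]
    _ = (Mmat W * (Mmat W).map (starRingEnd ℂ)).mulVec v := Matrix.mulVec_mulVec _ _ _
    _ = (-(Wᴴ * W)).mulVec v := by rw [key_a hsd]

lemma inner_CC (hsd : dual W = W) (hpi : W * Wᴴ * W = W)
    (x y : EuclideanSpace ℂ (Fin N ⊕ Fin N))
    (hy : y ∈ (LinearMap.ker (Matrix.toEuclideanLin W))ᗮ) :
    (inner ℂ (mulVecE Wᴴ (WithLp.toLp 2 (Tmap x))) (mulVecE Wᴴ (WithLp.toLp 2 (Tmap y))) : ℂ) = inner ℂ y x := by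
  rw [inner_eq, C_eq, C_eq, cvec_mulVec, cvec_cvec, dp_mulVec_left,
    Matrix.mulVec_mulVec, key_b hsd]
  have h1 : ((Wᴴ * W).map (starRingEnd ℂ)).mulVec (cvec y) = cvec ((Wᴴ * W).mulVec y) :=
    (cvec_mulVec _ _).symm
  rw [h1, proj_eq hpi y hy, inner_eq, dotProduct_comm]

end Final

theorem self_dual_partial_isometry {N : ℕ}
    (W : Matrix (Fin N ⊕ Fin N) (Fin N ⊕ Fin N) ℂ)
    (hsd : dual W = W) (hpi : W * Wᴴ * W = W) :
    Even (Module.finrank ℂ (LinearMap.ker (Matrix.toEuclideanLin W))ᗮ) ∧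
    (∀ v ∈ (LinearMap.ker (Matrix.toEuclideanLin W))ᗮ,
      (inner ℂ v (mulVecE Wᴴ (WithLp.toLp 2 (Tmap v))) : ℂ) = 0 ∧
      mulVecE Wᴴ (WithLp.toLp 2 (Tmap (mulVecE Wᴴ (WithLp.toLp 2 (Tmap v))))) = -v) := by
  set S := (LinearMap.ker (Matrix.toEuclideanLin W))ᗮ with hS
  have hmap : ∀ v ∈ S, mulVecE Wᴴ (WithLp.toLp 2 (Tmap v)) ∈ S := fun v _ => C_mem v
  have hCC : ∀ v ∈ S, mulVecE Wᴴ (WithLp.toLp 2 (Tmap (mulVecE Wᴴ (WithLp.toLp 2 (Tmap v))))) = -v := by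
    intro v hv
    apply WithLp.ofLp_injective 2
    rw [CC_eq hsd]
    show (-(Wᴴ * W)).mulVec v = -v
    rw [Matrix.neg_mulVec, proj_eq hpi v hv]
  have hinner : ∀ v ∈ S, ∀ w ∈ S,
      (inner ℂ (mulVecE Wᴴ (WithLp.toLp 2 (Tmap v))) (mulVecE Wᴴ (WithLp.toLp 2 (Tmap w))) : ℂ) = inner ℂ w v :=
    fun v _ w hw => inner_CC hsd hpi v w hw
  constructor
  · exact even_aux _ S (fun v => mulVecE Wᴴ (WithLp.toLp 2 (Tmap v))) rfl hmap hCC hinner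
  · intro v hv
    have ho : (inner ℂ (mulVecE Wᴴ (WithLp.toLp 2 (Tmap v))) v : ℂ) = 0 := by
      have h1 := hinner v hv (mulVecE Wᴴ (WithLp.toLp 2 (Tmap v))) (hmap v hv)
      rw [hCC v hv, inner_neg_right] at h1
      linear_combination -h1 / 2
    refine ⟨?_, hCC v hv⟩
    rw [← inner_conj_symm, ho, map_zero]
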